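/- Let A be the 8×8 block upper-triangular matrix of Eq. (33) in the paper (diagonal entries 0, −(γ/2+iω_a), −(γ/2−iω_a), −γ, −(γ+2iω_a), −(γ−2iω_a), −(3γ/2+iω̃_a), −(3γ/2−iω̃_a), with the only off-diagonal nonzero entries A_{2,7} = −2iχ and A_{3,8} = 2iχ). Then for γ > 0 the matrix exponential exp(tA) converges as t → ∞ to the rank-one projection onto the first coordinate, i.e., exp(tA) → e₁ e₁ᵀ. -/

import Mathlib

open Matrix Complex Filter

lemma exp_smul_tendsto_zero (z : ℂ) (hz : z.re < 0) :
    Tendsto (fun t : ℝ => Complex.exp (t * z)) atTop (nhds 0) := by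
  rw [tendsto_zero_iff_norm_tendsto_zero]
  have h : (fun t : ℝ => ‖Complex.exp (t * z)‖) = fun t : ℝ => Real.exp (t * z.re) := by
    ext t
    rw [Complex.norm_exp]
    congr 1
    simp [Complex.mul_re]
  rw [h]
  exact Real.tendsto_exp_atBot.comp (tendsto_id.atTop_mul_const_of_neg hz)

lemma sbm_mul_diag {n : Type*} [Fintype n] [DecidableEq n] (i j : n) (c : ℂ) (v : n → ℂ) :
    Matrix.single i j c * Matrix.diagonal v = Matrix.single i j (c * v j) := by
  ext a b
  rw [Matrix.mul_diagonal]
  simp only [Matrix.single, Matrix.of_apply]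
  aesop

lemma diag_mul_sbm {n : Type*} [Fintype n] [DecidableEq n] (i j : n) (c : ℂ) (v : n → ℂ) :
    Matrix.diagonal v * Matrix.single i j c = Matrix.single i j (v i * c) := by
  ext a b
  rw [Matrix.diagonal_mul]
  simp only [Matrix.single, Matrix.of_apply]
  aesop

lemma sbm_sub (i j : Fin 8) (x y : ℂ) :
    Matrix.single i j x - Matrix.single i j y
      = Matrix.single i j (x - y) := by
  have h := Matrix.single_add i j (x - y) y
  rw [sub_add_cancel] at h
  rw [h]
  abel

lemma re_neg_aux (γ ωa χ : ℝ) (hγ : 0 < γ) (i : Fin 8) (hi : i ≠ 0) :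
    ((![0, -((γ:ℂ)/2 + I * ωa), -((γ:ℂ)/2 - I * ωa), -(γ:ℂ),
      -((γ:ℂ) + 2 * I * ωa), -((γ:ℂ) - 2 * I * ωa),
      -(3 * (γ:ℂ)/2 + I * ((ωa:ℂ) - χ)), -(3 * (γ:ℂ)/2 - I * ((ωa:ℂ) - χ))] : Fin 8 → ℂ) i).re
      < 0 := by
  fin_cases i
  · exact absurd rfl hi
  · show (-((γ:ℂ)/2 + I * ωa)).re < 0
    simp; nlinarith
  · show (-((γ:ℂ)/2 - I * ωa)).re < 0
    simp; nlinarith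
  · show (-(γ:ℂ)).re < 0
    simp [hγ]
  · show (-((γ:ℂ) + 2 * I * ωa)).re < 0
    simp; nlinarith
  · show (-((γ:ℂ) - 2 * I * ωa)).re < 0
    simp; nlinarith
  · show (-(3 * (γ:ℂ)/2 + I * ((ωa:ℂ) - χ))).re < 0
    simp; nlinarith
  · show (-(3 * (γ:ℂ)/2 - I * ((ωa:ℂ) - χ))).re < 0
    simp; nlinarith


theorem stmt_15 (γ ωa χ : ℝ) (hγ : 0 < γ)
    (A : Matrix (Fin 8) (Fin 8) ℂ)
    (hA : A =
      Matrix.diagonal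
        ![0, -((γ:ℂ)/2 + I * ωa), -((γ:ℂ)/2 - I * ωa), -(γ:ℂ),
          -((γ:ℂ) + 2 * I * ωa), -((γ:ℂ) - 2 * I * ωa),
          -(3 * (γ:ℂ)/2 + I * ((ωa:ℂ) - χ)), -(3 * (γ:ℂ)/2 - I * ((ωa:ℂ) - χ))]
      + Matrix.single (1 : Fin 8) (6 : Fin 8) (-(2 * I * χ))
      + Matrix.single (2 : Fin 8) (7 : Fin 8) (2 * I * χ)) :
    Tendsto (fun t : ℝ => NormedSpace.exp (t • A)) atTop
      (nhds (Matrix.single (0 : Fin 8) (0 : Fin 8) (1 : ℂ))) := by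
  set d : Fin 8 → ℂ :=
    ![0, -((γ:ℂ)/2 + I * ωa), -((γ:ℂ)/2 - I * ωa), -(γ:ℂ),
      -((γ:ℂ) + 2 * I * ωa), -((γ:ℂ) - 2 * I * ωa),
      -(3 * (γ:ℂ)/2 + I * ((ωa:ℂ) - χ)), -(3 * (γ:ℂ)/2 - I * ((ωa:ℂ) - χ))] with hd
  have hden1 : (-(γ:ℂ) + I * χ) ≠ 0 := by
    intro h
    have := congrArg Complex.re h
    simp at this
    exact hγ.ne' this
  have hden2 : (-(γ:ℂ) - I * χ) ≠ 0 := by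
    intro h
    have := congrArg Complex.re h
    simp at this
    exact hγ.ne' this
  set c1 : ℂ := (-(2 * I * χ)) / (-(γ:ℂ) + I * χ) with hc1
  set c2 : ℂ := (2 * I * χ) / (-(γ:ℂ) - I * χ) with hc2
  set S : Matrix (Fin 8) (Fin 8) ℂ :=
    1 + Matrix.single (1 : Fin 8) (6 : Fin 8) c1 + Matrix.single (2 : Fin 8) (7 : Fin 8) c2 with hS
  set T : Matrix (Fin 8) (Fin 8) ℂ :=
    1 - Matrix.single (1 : Fin 8) (6 : Fin 8) c1 - Matrix.single (2 : Fin 8) (7 : Fin 8) c2 with hT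
  have z1 : ∀ x y : ℂ, Matrix.single (1 : Fin 8) (6 : Fin 8) x
      * Matrix.single (1 : Fin 8) (6 : Fin 8) y = 0 :=
    fun x y => Matrix.single_mul_single_of_ne _ _ _ _ (by decide) _
  have z2 : ∀ x y : ℂ, Matrix.single (1 : Fin 8) (6 : Fin 8) x
      * Matrix.single (2 : Fin 8) (7 : Fin 8) y = 0 :=
    fun x y => Matrix.single_mul_single_of_ne _ _ _ _ (by decide) _
  have z3 : ∀ x y : ℂ, Matrix.single (2 : Fin 8) (7 : Fin 8) x
      * Matrix.single (1 : Fin 8) (6 : Fin 8) y = 0 :=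
    fun x y => Matrix.single_mul_single_of_ne _ _ _ _ (by decide) _
  have z4 : ∀ x y : ℂ, Matrix.single (2 : Fin 8) (7 : Fin 8) x
      * Matrix.single (2 : Fin 8) (7 : Fin 8) y = 0 :=
    fun x y => Matrix.single_mul_single_of_ne _ _ _ _ (by decide) _
  have hST : S * T = 1 := by
    rw [hS, hT]
    simp only [mul_sub, sub_mul, add_mul, mul_add, one_mul, mul_one, z1, z2, z3, z4,
      sub_zero, add_zero, zero_add]
    abel
  have hTS : T * S = 1 := by
    rw [hS, hT]
    simp only [mul_sub, sub_mul, add_mul, mul_add, one_mul, mul_one, z1, z2, z3, z4,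
      sub_zero, add_zero, zero_add]
    abel
  have hval1 : c1 * d 6 - d 1 * c1 = -(2 * I * (χ:ℂ)) := by
    have h6 : d 6 = -(3 * (γ:ℂ)/2 + I * ((ωa:ℂ) - χ)) := rfl
    have h1 : d 1 = -((γ:ℂ)/2 + I * ωa) := rfl
    rw [h6, h1, hc1]
    field_simp
    ring
  have hval2 : c2 * d 7 - d 2 * c2 = 2 * I * (χ:ℂ) := by
    have h7 : d 7 = -(3 * (γ:ℂ)/2 - I * ((ωa:ℂ) - χ)) := rfl
    have h2 : d 2 = -((γ:ℂ)/2 - I * ωa) := rfl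
    rw [h7, h2, hc2]
    field_simp
    ring
  have hA' : A = S * Matrix.diagonal d * T := by
    rw [hA, hS, hT]
    simp only [add_mul, one_mul, sbm_mul_diag, mul_sub, mul_one, diag_mul_sbm,
      z1, z2, z3, z4, sub_zero]
    simp only [add_zero, zero_add]
    rw [← hval1, ← hval2, ← sbm_sub, ← sbm_sub]
    abel
  set u : (Matrix (Fin 8) (Fin 8) ℂ)ˣ := ⟨S, T, hST, hTS⟩ with hu
  have hexp : ∀ t : ℝ, NormedSpace.exp (t • A) =
      S * Matrix.diagonal (fun i => Complex.exp (t * d i)) * T := by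
    intro t
    have h1 : t • A = (↑u : Matrix (Fin 8) (Fin 8) ℂ) * Matrix.diagonal (t • d)
        * (↑(u⁻¹) : Matrix (Fin 8) (Fin 8) ℂ) := by
      show t • A = S * Matrix.diagonal (t • d) * T
      rw [hA', Matrix.diagonal_smul, mul_smul_comm, smul_mul_assoc]
    have hdv : NormedSpace.exp (t • d) = fun i => Complex.exp (t * d i) := by
      rw [Pi.exp_def]
      funext i
      rw [Pi.smul_apply, ← Complex.exp_eq_exp_ℂ, Complex.real_smul]
    rw [h1, Matrix.exp_units_conj, Matrix.exp_diagonal, hdv]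
    rfl
  have hw : S * Matrix.diagonal (fun i : Fin 8 => if i = 0 then (1:ℂ) else 0) * T
      = Matrix.single (0 : Fin 8) (0 : Fin 8) (1 : ℂ) := by
    have hdw : Matrix.diagonal (fun i : Fin 8 => if i = 0 then (1:ℂ) else 0)
        = Matrix.single (0 : Fin 8) (0 : Fin 8) (1:ℂ) := by
      ext a b
      simp only [Matrix.single, Matrix.of_apply, Matrix.diagonal]
      aesop
    have za : Matrix.single (1 : Fin 8) (6 : Fin 8) c1
        * Matrix.single (0 : Fin 8) (0 : Fin 8) (1:ℂ) = 0 :=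
      Matrix.single_mul_single_of_ne _ _ _ _ (by decide) _
    have zb : Matrix.single (2 : Fin 8) (7 : Fin 8) c2
        * Matrix.single (0 : Fin 8) (0 : Fin 8) (1:ℂ) = 0 :=
      Matrix.single_mul_single_of_ne _ _ _ _ (by decide) _
    have zc : Matrix.single (0 : Fin 8) (0 : Fin 8) (1:ℂ)
        * Matrix.single (1 : Fin 8) (6 : Fin 8) c1 = 0 :=
      Matrix.single_mul_single_of_ne _ _ _ _ (by decide) _
    have zd : Matrix.single (0 : Fin 8) (0 : Fin 8) (1:ℂ)
        * Matrix.single (2 : Fin 8) (7 : Fin 8) c2 = 0 :=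
      Matrix.single_mul_single_of_ne _ _ _ _ (by decide) _
    rw [hdw, hS, hT]
    simp only [add_mul, one_mul, mul_sub, mul_one, za, zb, zc, zd, add_zero, sub_zero]
  have hre : ∀ i : Fin 8, i ≠ 0 → (d i).re < 0 := by
    intro i hi
    rw [hd]
    exact re_neg_aux γ ωa χ hγ i hi
  have hdiag : Tendsto (fun t : ℝ => Matrix.diagonal (fun i => Complex.exp (t * d i))) atTop
      (nhds (Matrix.diagonal (fun i : Fin 8 => if i = 0 then (1:ℂ) else 0))) := by
    have hp : Tendsto (fun t : ℝ => fun i : Fin 8 => Complex.exp (t * d i)) atTop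
        (nhds (fun i : Fin 8 => if i = 0 then (1:ℂ) else 0)) := by
      rw [tendsto_pi_nhds]
      intro i
      by_cases hi : i = 0
      · subst hi
        have : ∀ t : ℝ, Complex.exp (t * d 0) = 1 := by
          intro t
          rw [show d 0 = 0 from rfl, mul_zero, Complex.exp_zero]
        simp only [this, if_pos rfl]
        exact tendsto_const_nhds
      · rw [if_neg hi]
        exact exp_smul_tendsto_zero _ (hre i hi)
    exact ((continuous_id.matrix_diagonal).tendsto _).comp hp
  have hfin := ((tendsto_const_nhds : Tendsto (fun _ : ℝ => S) atTop (nhds S)).mul hdiag).mul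
    (tendsto_const_nhds : Tendsto (fun _ : ℝ => T) atTop (nhds T))
  rw [hw] at hfin
  simpa only [hexp] using hfin
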